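/- Let R be a commutative ring, x, y ∈ R non-zero-divisors such that y is a non-zero-divisor on R/(x). Then the square formed by R, R_x, R_y, R_{xy} (with canonical localization maps) is cartesian: if a/x^m = b/y^n in R_{xy} with a, b ∈ R, m, n ≥ 1, x ∤ a, y ∤ b, a contradiction follows; equivalently, R = R_x ∩ R_y inside R_{xy}. -/

import Mathlib

/-- If `x ∣ y * r → x ∣ r` for all `r`, then `x ∣ y^n * r → x ∣ r`. -/
private lemma aux_pow_dvd {R : Type*} [CommRing R] {x y : R}
    (hyx : ∀ r : R, x ∣ y * r → x ∣ r) :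
    ∀ n : ℕ, ∀ r : R, x ∣ y ^ n * r → x ∣ r := by
  intro n
  induction n with
  | zero => intro r h; simpa using h
  | succ k ih =>
    intro r h
    apply hyx
    apply ih (y * r)
    have e : y ^ k * (y * r) = y ^ (k + 1) * r := by ring
    rw [e]; exact h

private lemma aux_key {R : Type*} [CommRing R] {x y : R}
    (hx : x ∈ nonZeroDivisors R)
    (hyx : ∀ r : R, x ∣ y * r → x ∣ r) :
    ∀ m : ℕ, ∀ n : ℕ, ∀ a b : R, a * y ^ n = b * x ^ m →
      ∃ r : R, a = r * x ^ m ∧ b = r * y ^ n := by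
  intro m
  induction m with
  | zero =>
    intro n a b h
    exact ⟨a, by simp, by simpa using h.symm⟩
  | succ k ih =>
    intro n a b h
    have hxa : x ∣ a := by
      apply aux_pow_dvd hyx n
      exact ⟨b * x ^ k, by rw [mul_comm (y ^ n) a, h, pow_succ]; ring⟩
    obtain ⟨a', rfl⟩ := hxa
    have h2 : x * (a' * y ^ n) = x * (b * x ^ k) := by
      rw [pow_succ] at h; linear_combination h
    have h' : a' * y ^ n = b * x ^ k :=
      (mul_cancel_left_mem_nonZeroDivisors hx).mp h2
    obtain ⟨r, hr1, hr2⟩ := ih n a' b h'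
    exact ⟨r, by rw [hr1, pow_succ]; ring, hr2⟩

theorem localization_square_cartesian
    {R : Type*} [CommRing R] (x y : R)
    (hx : x ∈ nonZeroDivisors R) (hy : y ∈ nonZeroDivisors R)
    (hyx : ∀ r : R, x ∣ y * r → x ∣ r)
    (fx : Localization.Away x →+* Localization.Away (x * y))
    (fy : Localization.Away y →+* Localization.Away (x * y))
    (hfx : ∀ r : R, fx (algebraMap R (Localization.Away x) r) =
      algebraMap R (Localization.Away (x * y)) r)
    (hfy : ∀ r : R, fy (algebraMap R (Localization.Away y) r) =
      algebraMap R (Localization.Away (x * y)) r) :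
    (Function.Injective fun r : R =>
        (algebraMap R (Localization.Away x) r, algebraMap R (Localization.Away y) r)) ∧
      ∀ (a : Localization.Away x) (b : Localization.Away y), fx a = fy b →
        ∃ r : R, algebraMap R (Localization.Away x) r = a ∧
          algebraMap R (Localization.Away y) r = b := by
  have hxle : Submonoid.powers x ≤ nonZeroDivisors R := Submonoid.powers_le.mpr hx
  have hxyle : Submonoid.powers (x * y) ≤ nonZeroDivisors R :=
    Submonoid.powers_le.mpr (mul_mem hx hy)
  have hinjx : Function.Injective (algebraMap R (Localization.Away x)) :=
    IsLocalization.injective _ hxle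
  have hinjxy : Function.Injective (algebraMap R (Localization.Away (x * y))) :=
    IsLocalization.injective _ hxyle
  constructor
  · intro r s h
    exact hinjx (congrArg Prod.fst h)
  · intro a b hab
    obtain ⟨⟨a', sa⟩, ha⟩ := IsLocalization.mk'_surjective (Submonoid.powers x) a
    obtain ⟨⟨b', sb⟩, hb⟩ := IsLocalization.mk'_surjective (Submonoid.powers y) b
    obtain ⟨m, hm⟩ := (Submonoid.mem_powers_iff _ _).mp sa.prop
    obtain ⟨n, hn⟩ := (Submonoid.mem_powers_iff _ _).mp sb.prop
    have ha' : a * algebraMap R (Localization.Away x) (sa : R) =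
        algebraMap R (Localization.Away x) a' := by
      rw [← ha]; exact IsLocalization.mk'_spec (Localization.Away x) a' sa
    have hb' : b * algebraMap R (Localization.Away y) (sb : R) =
        algebraMap R (Localization.Away y) b' := by
      rw [← hb]; exact IsLocalization.mk'_spec (Localization.Away y) b' sb
    have key : a' * (sb : R) = b' * (sa : R) := by
      apply hinjxy
      have e1 : fx a * algebraMap R (Localization.Away (x * y)) (sa : R) =
          algebraMap R (Localization.Away (x * y)) a' := by
        rw [← hfx, ← hfx, ← map_mul, ha']
      have e2 : fy b * algebraMap R (Localization.Away (x * y)) (sb : R) =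
          algebraMap R (Localization.Away (x * y)) b' := by
        rw [← hfy, ← hfy, ← map_mul, hb']
      rw [map_mul, map_mul, ← e1, ← e2, hab]
      ring
    rw [← hm, ← hn] at key
    obtain ⟨r, hr1, hr2⟩ := aux_key hx hyx m n a' b' key
    refine ⟨r, ?_, ?_⟩
    · rw [← ha, IsLocalization.eq_mk'_iff_mul_eq, ← map_mul, ← hm]
      exact congrArg _ hr1.symm
    · rw [← hb, IsLocalization.eq_mk'_iff_mul_eq, ← map_mul, ← hn]
      exact congrArg _ hr2.symm
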